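/- Let Y ~ q, X ~ p, and U₀, U₁ i.i.d. uniform on [0,1], all mutually independent. If P( (X,U₁) <_lex (Y,U₀) ) ≠ 1/2, where <_lex denotes the lexicographic order on T × [0,1] induced by (T, ≺) and ([0,1], <), then for every integer m ≥ 1 the stochastic rank statistic R computed with m resampled points is not uniformly distributed on {0,1,…,m}. -/

import Mathlib

open MeasureTheory ProbabilityTheory
open scoped ENNReal

noncomputable section

/-- The uniform distribution on the interval `[0,1]`. -/
def unifIcc : Measure ℝ := volume.restrict (Set.Icc 0 1)

/-- The setup of the stochastic rank statistic: on a common probability space `(Ω, μ)`,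
`X 0` has distribution `q`, the `X i` for `i ≠ 0` have distribution `p`, the `U i` are
uniform on `[0,1]`, and all of `X 0, …, X m, U 0, …, U m` are mutually independent.
(Mutual independence of the `2(m+1)` variables is recorded by independence of the pairs
`(X i, U i)` together with each pair having the product law.) -/
def IsRankSetup {T : Type} [MeasurableSpace T] {Ω : Type} [MeasurableSpace Ω]
    (μ : Measure Ω) (p q : Measure T) (m : ℕ)
    (X : Fin (m + 1) → Ω → T) (U : Fin (m + 1) → Ω → ℝ) : Prop :=
  (∀ i, Measurable (X i)) ∧ (∀ i, Measurable (U i)) ∧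
  iIndepFun (fun i ω => (X i ω, U i ω)) μ ∧
  μ.map (fun ω => (X 0 ω, U 0 ω)) = q.prod unifIcc ∧
  ∀ i : Fin (m + 1), i ≠ 0 → μ.map (fun ω => (X i ω, U i ω)) = p.prod unifIcc

open scoped Classical in
/-- The stochastic rank statistic
`R = ∑_{j=1}^m (1[X j ≺ X 0] + 1[X j = X 0 ∧ U j < U 0])`. -/
def rankStat {T : Type} {Ω : Type} (r : T → T → Prop) (m : ℕ)
    (X : Fin (m + 1) → Ω → T) (U : Fin (m + 1) → Ω → ℝ) (ω : Ω) : ℕ :=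
  ∑ j : Fin m, ((if r (X j.succ ω) (X 0 ω) then 1 else 0) +
    (if X j.succ ω = X 0 ω ∧ U j.succ ω < U 0 ω then 1 else 0))

instance : IsProbabilityMeasure unifIcc := by
  constructor
  simp [unifIcc, Real.volume_Icc]

open scoped Classical in
lemma rankStat_eq_sum {T Ω : Type} (r : T → T → Prop) (hirr : ∀ a, ¬ r a a) (m : ℕ)
    (X : Fin (m + 1) → Ω → T) (U : Fin (m + 1) → Ω → ℝ) (ω : Ω) :
    rankStat r m X U ω =
      ∑ j : Fin m, (if (r (X j.succ ω) (X 0 ω) ∨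
          (X j.succ ω = X 0 ω ∧ U j.succ ω < U 0 ω)) then 1 else 0) := by
  unfold rankStat
  refine Finset.sum_congr rfl fun j _ => ?_
  by_cases h1 : r (X j.succ ω) (X 0 ω)
  · have h2 : ¬ (X j.succ ω = X 0 ω ∧ U j.succ ω < U 0 ω) := fun h => hirr _ (h.1 ▸ h1)
    simp [h1, h2]
  · by_cases h2 : X j.succ ω = X 0 ω ∧ U j.succ ω < U 0 ω <;> simp [h1, h2, hirr]

/-- **Corollary (no adversarial symmetry).** Let `Y ~ q`, `X ~ p`, and `U₀, U₁` be
i.i.d. uniform on `[0,1]`, all mutually independent (so that the joint law of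
`((X, U₁), (Y, U₀))` is the product measure `(p ⊗ unif) ⊗ (q ⊗ unif)`).  If
`P((X, U₁) <_lex (Y, U₀)) ≠ 1/2`, where `<_lex` is the lexicographic order on `T × [0,1]`
induced by `(T, ≺)` and `([0,1], <)`, then for every `m ≥ 1` the stochastic rank statistic
is not uniformly distributed on `{0, …, m}`. -/
theorem srs_nonuniform_of_lex_asymmetry
    {T : Type} [Countable T] [Nonempty T] [MeasurableSpace T] [MeasurableSingletonClass T]
    (r : T → T → Prop) (hr : IsStrictTotalOrder T r) (p q : PMF T)
    (hlex :
      ((p.toMeasure.prod unifIcc).prod (q.toMeasure.prod unifIcc))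
        {z : (T × ℝ) × (T × ℝ) |
          r z.1.1 z.2.1 ∨ (z.1.1 = z.2.1 ∧ z.1.2 < z.2.2)} ≠ 2⁻¹) :
    ∀ m : ℕ, 1 ≤ m →
      ∀ (Ω : Type) (_ : MeasurableSpace Ω) (μ : Measure Ω), IsProbabilityMeasure μ →
        ∀ (X : Fin (m + 1) → Ω → T) (U : Fin (m + 1) → Ω → ℝ),
          IsRankSetup μ p.toMeasure q.toMeasure m X U →
          ¬ (∀ k : ℕ, k ≤ m →
              μ {ω | rankStat r m X U ω = k} = ((m : ℝ≥0∞) + 1)⁻¹) := by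
  classical
  intro m hm Ω mΩ μ hμ X U hsetup huni
  obtain ⟨hX, hU, hind, h0, hi⟩ := hsetup
  apply hlex
  set ν := (p.toMeasure.prod unifIcc).prod (q.toMeasure.prod unifIcc) with hν
  set S := {z : (T × ℝ) × (T × ℝ) |
      r z.1.1 z.2.1 ∨ (z.1.1 = z.2.1 ∧ z.1.2 < z.2.2)} with hS
  have hirr : ∀ a : T, ¬ r a a := fun a => haveI := hr; irrefl a
  have hTT : ∀ s : Set (T × T), MeasurableSet s := fun s => s.to_countable.measurableSet
  have hf1 : Measurable fun z : (T × ℝ) × (T × ℝ) => (z.1.1, z.2.1) :=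
    (measurable_fst.comp measurable_fst).prodMk (measurable_fst.comp measurable_snd)
  have hSmeas : MeasurableSet S := by
    have h1 : MeasurableSet {z : (T × ℝ) × (T × ℝ) | r z.1.1 z.2.1} :=
      hf1 (hTT {ab : T × T | r ab.1 ab.2})
    have h2 : MeasurableSet {z : (T × ℝ) × (T × ℝ) | z.1.1 = z.2.1} :=
      hf1 (hTT {ab : T × T | ab.1 = ab.2})
    have h3 : MeasurableSet {z : (T × ℝ) × (T × ℝ) | z.1.2 < z.2.2} :=
      measurableSet_lt (measurable_snd.comp measurable_fst) (measurable_snd.comp measurable_snd)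
    have : S = {z : (T × ℝ) × (T × ℝ) | r z.1.1 z.2.1} ∪
        ({z : (T × ℝ) × (T × ℝ) | z.1.1 = z.2.1} ∩ {z : (T × ℝ) × (T × ℝ) | z.1.2 < z.2.2}) := by
      ext z; simp [hS, Set.mem_setOf_eq, Set.mem_union, Set.mem_inter_iff]
    rw [this]; exact h1.union (h2.inter h3)
  -- pair maps
  have hW : ∀ i, Measurable fun ω => (X i ω, U i ω) := fun i => (hX i).prodMk (hU i)
  have hpair : ∀ j : Fin m, Measurable fun ω => ((X j.succ ω, U j.succ ω), (X 0 ω, U 0 ω)) :=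
    fun j => (hW j.succ).prodMk (hW 0)
  have hmap : ∀ j : Fin m,
      μ.map (fun ω => ((X j.succ ω, U j.succ ω), (X 0 ω, U 0 ω))) = ν := by
    intro j
    have hIF : IndepFun (fun ω => (X j.succ ω, U j.succ ω)) (fun ω => (X 0 ω, U 0 ω)) μ :=
      hind.indepFun (Fin.succ_ne_zero j)
    have := (indepFun_iff_map_prod_eq_prod_map_map (hW j.succ).aemeasurable
        (hW 0).aemeasurable).mp hIF
    rw [this, hi j.succ (Fin.succ_ne_zero j), h0]
  set E : Fin m → Set Ω :=
    fun j => (fun ω => ((X j.succ ω, U j.succ ω), (X 0 ω, U 0 ω))) ⁻¹' S with hE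
  have hEmeas : ∀ j, MeasurableSet (E j) := fun j => (hpair j) hSmeas
  have hEmeasure : ∀ j, μ (E j) = ν S := by
    intro j
    rw [hE]
    rw [← Measure.map_apply (hpair j) hSmeas, hmap j]
  have hmemE : ∀ (j : Fin m) (ω : Ω), ω ∈ E j ↔
      (r (X j.succ ω) (X 0 ω) ∨ (X j.succ ω = X 0 ω ∧ U j.succ ω < U 0 ω)) := by
    intro j ω; rfl
  set R : Ω → ℕ := rankStat r m X U with hRdef
  have hRsum : ∀ ω, R ω = ∑ j : Fin m, (if ω ∈ E j then 1 else 0) := by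
    intro ω
    rw [hRdef, rankStat_eq_sum r hirr m X U ω]
    exact Finset.sum_congr rfl fun j _ => if_congr (hmemE j ω).symm rfl rfl
  have hRmeas : Measurable R := by
    have : R = fun ω => ∑ j : Fin m, (if ω ∈ E j then 1 else 0) := funext hRsum
    rw [this]
    exact Finset.measurable_sum _ fun j _ =>
      Measurable.ite (hEmeas j) measurable_const measurable_const
  have hRle : ∀ ω, R ω ≤ m := by
    intro ω
    rw [hRsum ω]
    calc ∑ j : Fin m, (if ω ∈ E j then 1 else 0)
        ≤ ∑ _j : Fin m, 1 := Finset.sum_le_sum (fun j _ => by split <;> simp)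
      _ = m := by simp
  -- first computation of the integral
  have hint1 : ∫⁻ ω, (R ω : ℝ≥0∞) ∂μ = (m : ℝ≥0∞) * ν S := by
    have hpt : ∀ ω, (R ω : ℝ≥0∞) = ∑ j : Fin m, Set.indicator (E j) (fun _ => 1) ω := by
      intro ω
      rw [hRsum ω]
      push_cast
      exact Finset.sum_congr rfl fun j _ => by
        by_cases h : ω ∈ E j <;> simp [h, Set.indicator_apply]
    simp_rw [hpt]
    rw [lintegral_finset_sum _ fun j _ =>
      (measurable_const.indicator (hEmeas j))]
    have : ∀ j : Fin m, ∫⁻ ω, Set.indicator (E j) (fun _ => (1:ℝ≥0∞)) ω ∂μ = ν S := by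
      intro j
      rw [show (fun _ : Ω => (1:ℝ≥0∞)) = (1 : Ω → ℝ≥0∞) from rfl,
        lintegral_indicator_one (hEmeas j), hEmeasure j]
    simp_rw [this]
    simp [mul_comm]
  -- second computation of the integral
  have hsingle : ∀ k : ℕ, MeasurableSet {ω | R ω = k} := by
    intro k
    exact hRmeas (measurableSet_singleton k)
  have hint2 : ∫⁻ ω, (R ω : ℝ≥0∞) ∂μ
      = ∑ k ∈ Finset.range (m + 1), (k : ℝ≥0∞) * μ {ω | R ω = k} := by
    have hpt : ∀ ω, (R ω : ℝ≥0∞)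
        = ∑ k ∈ Finset.range (m + 1), (k : ℝ≥0∞) * Set.indicator {ω | R ω = k} (fun _ => 1) ω := by
      intro ω
      rw [Finset.sum_eq_single (R ω)]
      · simp [Set.indicator_apply]
      · intro k _ hk
        have : ω ∉ {ω' | R ω' = k} := fun h => hk (h ▸ rfl)
        simp [Set.indicator_of_notMem this]
      · intro h
        exact absurd (Finset.mem_range.mpr (Nat.lt_succ_of_le (hRle ω))) h
    simp_rw [hpt]
    rw [lintegral_finset_sum _ fun k _ =>
      (measurable_const.indicator (hsingle k)).const_mul _]
    refine Finset.sum_congr rfl fun k _ => ?_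
    rw [lintegral_const_mul _ (measurable_const.indicator (hsingle k))]
    congr 1
    rw [show (fun _ : Ω => (1:ℝ≥0∞)) = (1 : Ω → ℝ≥0∞) from rfl,
      lintegral_indicator_one (hsingle k)]
  -- combine
  have key : (m : ℝ≥0∞) * ν S
      = ((∑ k ∈ Finset.range (m + 1), k : ℕ) : ℝ≥0∞) * ((m : ℝ≥0∞) + 1)⁻¹ := by
    rw [← hint1, hint2]
    push_cast
    rw [Finset.sum_mul]
    refine Finset.sum_congr rfl fun k hk => ?_
    rw [huni k (Nat.lt_succ_iff.mp (Finset.mem_range.mp hk))]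
  have hm1ne : ((m : ℝ≥0∞) + 1) ≠ 0 := by simp
  have hm1top : ((m : ℝ≥0∞) + 1) ≠ ⊤ := by
    simp [ENNReal.add_ne_top]
  have hgauss : ((∑ k ∈ Finset.range (m + 1), k : ℕ) : ℝ≥0∞) * 2
      = ((m : ℝ≥0∞) + 1) * (m : ℝ≥0∞) := by
    have := Finset.sum_range_id_mul_two (m + 1)
    have h2 : (((∑ k ∈ Finset.range (m + 1), k) * 2 : ℕ) : ℝ≥0∞)
        = (((m + 1) * m : ℕ) : ℝ≥0∞) := by rw [this]; simp
    push_cast at h2 ⊢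
    exact h2
  have hfinal : ((m : ℝ≥0∞) + 1) * (m : ℝ≥0∞) * (2 * ν S)
      = ((m : ℝ≥0∞) + 1) * (m : ℝ≥0∞) * 1 := by
    calc ((m : ℝ≥0∞) + 1) * (m : ℝ≥0∞) * (2 * ν S)
        = ((m : ℝ≥0∞) + 1) * ((m : ℝ≥0∞) * ν S) * 2 := by ring
      _ = ((m : ℝ≥0∞) + 1) * (((∑ k ∈ Finset.range (m + 1), k : ℕ) : ℝ≥0∞)
            * ((m : ℝ≥0∞) + 1)⁻¹) * 2 := by rw [key]
      _ = ((∑ k ∈ Finset.range (m + 1), k : ℕ) : ℝ≥0∞) * 2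
            * (((m : ℝ≥0∞) + 1) * ((m : ℝ≥0∞) + 1)⁻¹) := by ring
      _ = ((∑ k ∈ Finset.range (m + 1), k : ℕ) : ℝ≥0∞) * 2 := by
            rw [ENNReal.mul_inv_cancel hm1ne hm1top, mul_one]
      _ = ((m : ℝ≥0∞) + 1) * (m : ℝ≥0∞) := hgauss
      _ = ((m : ℝ≥0∞) + 1) * (m : ℝ≥0∞) * 1 := by rw [mul_one]
  have hane : ((m : ℝ≥0∞) + 1) * (m : ℝ≥0∞) ≠ 0 := by
    simp only [ne_eq, mul_eq_zero, not_or]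
    constructor
    · exact hm1ne
    · exact Nat.cast_ne_zero.mpr (by omega)
  have hatop : ((m : ℝ≥0∞) + 1) * (m : ℝ≥0∞) ≠ ⊤ := by
    exact ENNReal.mul_ne_top hm1top (ENNReal.natCast_ne_top m)
  have h2θ : 2 * ν S = 1 := (ENNReal.mul_right_inj hane hatop).mp hfinal
  calc ν S = (2⁻¹ * 2) * ν S := by
        rw [ENNReal.inv_mul_cancel (by norm_num) (by norm_num), one_mul]
    _ = 2⁻¹ * (2 * ν S) := by ring
    _ = 2⁻¹ := by rw [h2θ, mul_one]

end
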